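/- There exist no vectors α, β ∈ ℂ²⊗ℂ² ≅ ℂ⁴ such that ⟨γ^{ij}, α ⊗ β⟩ = 0 for every ordered pair (i,j) with i ≠ j and (i,j) ≠ (1,2), while ⟨γ^{12}, α ⊗ β⟩ ≠ 0. That is, the state γ^{12} admits no product detecting state across the A1A2 : B1B2 bipartition; hence, by Chefles' criterion, the set S^Bell_{(2)} is not conclusively distinguishable via LOCC, so the four Bell states do not allow 2-CLSM and mutual orthogonality does not guarantee conclusive markability under LOCC (Proposition 6). -/

import Mathlib

/-!
Statement 15 (Proposition 6): In the 2-CLSM set of the Bell basis, the state γ^{12}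
admits no product detecting state across the A1A2 : B1B2 bipartition; hence the set
S^Bell_{(2)} is not conclusively distinguishable via LOCC, so the four Bell states do
not allow 2-CLSM.
-/

noncomputable section
open scoped ComplexInnerProductSpace

/-- The qubit Hilbert space `ℂ²`. -/
abbrev Qubit : Type := EuclideanSpace ℂ (Fin 2)

/-- The (Kronecker) tensor product of two vectors, realized in `EuclideanSpace ℂ (ι × κ)`. -/
def tp {ι κ : Type} (x : EuclideanSpace ℂ ι) (y : EuclideanSpace ℂ κ) :
    EuclideanSpace ℂ (ι × κ) :=
  (WithLp.equiv 2 (ι × κ → ℂ)).symm (fun p => x p.1 * y p.2)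

/-- A qubit vector from its two coordinates. -/
def mk2 (a b : ℂ) : Qubit := (WithLp.equiv 2 (Fin 2 → ℂ)).symm ![a, b]

/-- `1/√2` in `ℂ`. -/
def c2 : ℂ := ((Real.sqrt 2 : ℂ))⁻¹

/-- The four Bell states `B¹ = (|00⟩+|11⟩)/√2`, `B² = (|00⟩−|11⟩)/√2`,
`B³ = (|01⟩+|10⟩)/√2`, `B⁴ = (|01⟩−|10⟩)/√2` (indexed by `Fin 4`). -/
def bell : Fin 4 → EuclideanSpace ℂ (Fin 2 × Fin 2) :=
  ![c2 • (tp (mk2 1 0) (mk2 1 0) + tp (mk2 0 1) (mk2 0 1)),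
    c2 • (tp (mk2 1 0) (mk2 1 0) - tp (mk2 0 1) (mk2 0 1)),
    c2 • (tp (mk2 1 0) (mk2 0 1) + tp (mk2 0 1) (mk2 1 0)),
    c2 • (tp (mk2 1 0) (mk2 0 1) - tp (mk2 0 1) (mk2 1 0))]

/-- The 2-CLSM vectors of the Bell basis in the `A1A2 : B1B2` grouping:
`γ^{ij} = Σ_{a,b,c,d} cⁱ_{ab} cʲ_{cd} (|a⟩⊗|c⟩) ⊗ (|b⟩⊗|d⟩)`, i.e. the vector whose
coordinate at `((a, c), (b, d))` is `Bⁱ (a, b) · Bʲ (c, d)`.  The first `ℂ⁴` factor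
(indices `(a, c)`) is Alice's system `A1A2`, the second (indices `(b, d)`) Bob's
`B1B2`. -/
def γ (i j : Fin 4) : EuclideanSpace ℂ ((Fin 2 × Fin 2) × (Fin 2 × Fin 2)) :=
  (WithLp.equiv 2 (((Fin 2 × Fin 2) × (Fin 2 × Fin 2)) → ℂ)).symm
    (fun p => bell i (p.1.1, p.2.1) * bell j (p.1.2, p.2.2))

lemma conj_c2 : (starRingEnd ℂ) c2 = c2 := by
  simp [c2, map_inv₀, Complex.conj_ofReal]

lemma c2_sq_ne : c2 ^ 2 ≠ 0 := by
  have h2 : Real.sqrt 2 ≠ 0 := by positivity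
  have : c2 ≠ 0 := inv_ne_zero (Complex.ofReal_ne_zero.mpr h2)
  exact pow_ne_zero 2 this

lemma comp01 (α β : EuclideanSpace ℂ (Fin 2 × Fin 2)) :
    ⟪γ 0 1, tp α β⟫ = c2 ^ 2 * (α (0,0) * β (0,0) - α (0,1) * β (0,1) + α (1,0) * β (1,0) - α (1,1) * β (1,1)) := by
  simp only [γ, tp, bell, mk2, PiLp.inner_apply, RCLike.inner_apply,
    WithLp.equiv_symm_apply, PiLp.toLp_apply, Fintype.sum_prod_type, Fin.sum_univ_two,
    Matrix.cons_val', Matrix.cons_val_zero, Matrix.cons_val_one, Matrix.head_cons, Matrix.cons_val_two, Matrix.cons_val_three, Matrix.tail_cons,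
    Matrix.cons_val_fin_one, Matrix.head_fin_const, PiLp.smul_apply, PiLp.add_apply,
    PiLp.sub_apply, smul_eq_mul, map_mul, map_one, map_zero, map_neg, conj_c2,
    map_sub, map_add]
  ring

lemma comp10 (α β : EuclideanSpace ℂ (Fin 2 × Fin 2)) :
    ⟪γ 1 0, tp α β⟫ = c2 ^ 2 * (α (0,0) * β (0,0) + α (0,1) * β (0,1) - α (1,0) * β (1,0) - α (1,1) * β (1,1)) := by
  simp only [γ, tp, bell, mk2, PiLp.inner_apply, RCLike.inner_apply,
    WithLp.equiv_symm_apply, PiLp.toLp_apply, Fintype.sum_prod_type, Fin.sum_univ_two,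
    Matrix.cons_val', Matrix.cons_val_zero, Matrix.cons_val_one, Matrix.head_cons, Matrix.cons_val_two, Matrix.cons_val_three, Matrix.tail_cons,
    Matrix.cons_val_fin_one, Matrix.head_fin_const, PiLp.smul_apply, PiLp.add_apply,
    PiLp.sub_apply, smul_eq_mul, map_mul, map_one, map_zero, map_neg, conj_c2,
    map_sub, map_add]
  ring

lemma comp02 (α β : EuclideanSpace ℂ (Fin 2 × Fin 2)) :
    ⟪γ 0 2, tp α β⟫ = c2 ^ 2 * (α (0,0) * β (0,1) + α (0,1) * β (0,0) + α (1,0) * β (1,1) + α (1,1) * β (1,0)) := by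
  simp only [γ, tp, bell, mk2, PiLp.inner_apply, RCLike.inner_apply,
    WithLp.equiv_symm_apply, PiLp.toLp_apply, Fintype.sum_prod_type, Fin.sum_univ_two,
    Matrix.cons_val', Matrix.cons_val_zero, Matrix.cons_val_one, Matrix.head_cons, Matrix.cons_val_two, Matrix.cons_val_three, Matrix.tail_cons,
    Matrix.cons_val_fin_one, Matrix.head_fin_const, PiLp.smul_apply, PiLp.add_apply,
    PiLp.sub_apply, smul_eq_mul, map_mul, map_one, map_zero, map_neg, conj_c2,
    map_sub, map_add]
  ring

lemma comp03 (α β : EuclideanSpace ℂ (Fin 2 × Fin 2)) :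
    ⟪γ 0 3, tp α β⟫ = c2 ^ 2 * (α (0,0) * β (0,1) - α (0,1) * β (0,0) + α (1,0) * β (1,1) - α (1,1) * β (1,0)) := by
  simp only [γ, tp, bell, mk2, PiLp.inner_apply, RCLike.inner_apply,
    WithLp.equiv_symm_apply, PiLp.toLp_apply, Fintype.sum_prod_type, Fin.sum_univ_two,
    Matrix.cons_val', Matrix.cons_val_zero, Matrix.cons_val_one, Matrix.head_cons, Matrix.cons_val_two, Matrix.cons_val_three, Matrix.tail_cons,
    Matrix.cons_val_fin_one, Matrix.head_fin_const, PiLp.smul_apply, PiLp.add_apply,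
    PiLp.sub_apply, smul_eq_mul, map_mul, map_one, map_zero, map_neg, conj_c2,
    map_sub, map_add]
  ring

lemma comp12 (α β : EuclideanSpace ℂ (Fin 2 × Fin 2)) :
    ⟪γ 1 2, tp α β⟫ = c2 ^ 2 * (α (0,0) * β (0,1) + α (0,1) * β (0,0) - α (1,0) * β (1,1) - α (1,1) * β (1,0)) := by
  simp only [γ, tp, bell, mk2, PiLp.inner_apply, RCLike.inner_apply,
    WithLp.equiv_symm_apply, PiLp.toLp_apply, Fintype.sum_prod_type, Fin.sum_univ_two,
    Matrix.cons_val', Matrix.cons_val_zero, Matrix.cons_val_one, Matrix.head_cons, Matrix.cons_val_two, Matrix.cons_val_three, Matrix.tail_cons,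
    Matrix.cons_val_fin_one, Matrix.head_fin_const, PiLp.smul_apply, PiLp.add_apply,
    PiLp.sub_apply, smul_eq_mul, map_mul, map_one, map_zero, map_neg, conj_c2,
    map_sub, map_add]
  ring

lemma comp13 (α β : EuclideanSpace ℂ (Fin 2 × Fin 2)) :
    ⟪γ 1 3, tp α β⟫ = c2 ^ 2 * (α (0,0) * β (0,1) - α (0,1) * β (0,0) - α (1,0) * β (1,1) + α (1,1) * β (1,0)) := by
  simp only [γ, tp, bell, mk2, PiLp.inner_apply, RCLike.inner_apply,
    WithLp.equiv_symm_apply, PiLp.toLp_apply, Fintype.sum_prod_type, Fin.sum_univ_two,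
    Matrix.cons_val', Matrix.cons_val_zero, Matrix.cons_val_one, Matrix.head_cons, Matrix.cons_val_two, Matrix.cons_val_three, Matrix.tail_cons,
    Matrix.cons_val_fin_one, Matrix.head_fin_const, PiLp.smul_apply, PiLp.add_apply,
    PiLp.sub_apply, smul_eq_mul, map_mul, map_one, map_zero, map_neg, conj_c2,
    map_sub, map_add]
  ring

lemma comp20 (α β : EuclideanSpace ℂ (Fin 2 × Fin 2)) :
    ⟪γ 2 0, tp α β⟫ = c2 ^ 2 * (α (0,0) * β (1,0) + α (0,1) * β (1,1) + α (1,0) * β (0,0) + α (1,1) * β (0,1)) := by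
  simp only [γ, tp, bell, mk2, PiLp.inner_apply, RCLike.inner_apply,
    WithLp.equiv_symm_apply, PiLp.toLp_apply, Fintype.sum_prod_type, Fin.sum_univ_two,
    Matrix.cons_val', Matrix.cons_val_zero, Matrix.cons_val_one, Matrix.head_cons, Matrix.cons_val_two, Matrix.cons_val_three, Matrix.tail_cons,
    Matrix.cons_val_fin_one, Matrix.head_fin_const, PiLp.smul_apply, PiLp.add_apply,
    PiLp.sub_apply, smul_eq_mul, map_mul, map_one, map_zero, map_neg, conj_c2,
    map_sub, map_add]
  ring

lemma comp30 (α β : EuclideanSpace ℂ (Fin 2 × Fin 2)) :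
    ⟪γ 3 0, tp α β⟫ = c2 ^ 2 * (α (0,0) * β (1,0) + α (0,1) * β (1,1) - α (1,0) * β (0,0) - α (1,1) * β (0,1)) := by
  simp only [γ, tp, bell, mk2, PiLp.inner_apply, RCLike.inner_apply,
    WithLp.equiv_symm_apply, PiLp.toLp_apply, Fintype.sum_prod_type, Fin.sum_univ_two,
    Matrix.cons_val', Matrix.cons_val_zero, Matrix.cons_val_one, Matrix.head_cons, Matrix.cons_val_two, Matrix.cons_val_three, Matrix.tail_cons,
    Matrix.cons_val_fin_one, Matrix.head_fin_const, PiLp.smul_apply, PiLp.add_apply,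
    PiLp.sub_apply, smul_eq_mul, map_mul, map_one, map_zero, map_neg, conj_c2,
    map_sub, map_add]
  ring

lemma comp21 (α β : EuclideanSpace ℂ (Fin 2 × Fin 2)) :
    ⟪γ 2 1, tp α β⟫ = c2 ^ 2 * (α (0,0) * β (1,0) - α (0,1) * β (1,1) + α (1,0) * β (0,0) - α (1,1) * β (0,1)) := by
  simp only [γ, tp, bell, mk2, PiLp.inner_apply, RCLike.inner_apply,
    WithLp.equiv_symm_apply, PiLp.toLp_apply, Fintype.sum_prod_type, Fin.sum_univ_two,
    Matrix.cons_val', Matrix.cons_val_zero, Matrix.cons_val_one, Matrix.head_cons, Matrix.cons_val_two, Matrix.cons_val_three, Matrix.tail_cons,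
    Matrix.cons_val_fin_one, Matrix.head_fin_const, PiLp.smul_apply, PiLp.add_apply,
    PiLp.sub_apply, smul_eq_mul, map_mul, map_one, map_zero, map_neg, conj_c2,
    map_sub, map_add]
  ring

lemma comp31 (α β : EuclideanSpace ℂ (Fin 2 × Fin 2)) :
    ⟪γ 3 1, tp α β⟫ = c2 ^ 2 * (α (0,0) * β (1,0) - α (0,1) * β (1,1) - α (1,0) * β (0,0) + α (1,1) * β (0,1)) := by
  simp only [γ, tp, bell, mk2, PiLp.inner_apply, RCLike.inner_apply,
    WithLp.equiv_symm_apply, PiLp.toLp_apply, Fintype.sum_prod_type, Fin.sum_univ_two,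
    Matrix.cons_val', Matrix.cons_val_zero, Matrix.cons_val_one, Matrix.head_cons, Matrix.cons_val_two, Matrix.cons_val_three, Matrix.tail_cons,
    Matrix.cons_val_fin_one, Matrix.head_fin_const, PiLp.smul_apply, PiLp.add_apply,
    PiLp.sub_apply, smul_eq_mul, map_mul, map_one, map_zero, map_neg, conj_c2,
    map_sub, map_add]
  ring

/-- There are no `α, β ∈ ℂ²⊗ℂ² ≅ ℂ⁴` such that `α ⊗ β` is orthogonal to every `γ^{ij}`
with `i ≠ j`, `(i, j) ≠ (1, 2)` (here `(0, 1)` in `Fin 4` indexing) while having nonzero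
overlap with `γ^{12}`: the state `γ^{12}` admits no product detecting state. -/
theorem bell_2CLSM_no_product_detecting_state :
    ¬ ∃ α β : EuclideanSpace ℂ (Fin 2 × Fin 2),
      (∀ i j : Fin 4, i ≠ j → (i, j) ≠ ((0 : Fin 4), (1 : Fin 4)) →
        ⟪γ i j, tp α β⟫ = 0) ∧
      ⟪γ 0 1, tp α β⟫ ≠ 0 := by
  rintro ⟨α, β, h, hne⟩
  have get : ∀ i j : Fin 4, i ≠ j → (i, j) ≠ ((0 : Fin 4), (1 : Fin 4)) →
      ∀ F : ℂ, ⟪γ i j, tp α β⟫ = c2 ^ 2 * F → F = 0 := by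
    intro i j hij hij' F hF
    have := h i j hij hij'
    rw [hF] at this
    exact (mul_eq_zero.mp this).resolve_left c2_sq_ne
  have E10 := get 1 0 (by decide) (by decide) _ (comp10 α β)
  have E02 := get 0 2 (by decide) (by decide) _ (comp02 α β)
  have E03 := get 0 3 (by decide) (by decide) _ (comp03 α β)
  have E12 := get 1 2 (by decide) (by decide) _ (comp12 α β)
  have E13 := get 1 3 (by decide) (by decide) _ (comp13 α β)
  have E20 := get 2 0 (by decide) (by decide) _ (comp20 α β)
  have E30 := get 3 0 (by decide) (by decide) _ (comp30 α β)
  have E21 := get 2 1 (by decide) (by decide) _ (comp21 α β)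
  have E31 := get 3 1 (by decide) (by decide) _ (comp31 α β)
  -- vanishing cross products
  have z1 : α (0,0) * β (0,1) = 0 := by linear_combination (E02 + E03 + E12 + E13) / 4
  have z3 : α (1,0) * β (1,1) = 0 := by linear_combination (E02 + E03 - E12 - E13) / 4
  have w1 : α (0,0) * β (1,0) = 0 := by linear_combination (E20 + E30 + E21 + E31) / 4
  have w2 : α (0,1) * β (1,1) = 0 := by linear_combination (E20 + E30 - E21 - E31) / 4
  -- products of the diagonal terms vanish
  have P12 : (α (0,0) * β (0,0)) * (α (0,1) * β (0,1)) = 0 := by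
    linear_combination (α (0,1) * β (0,0)) * z1
  have P34 : (α (1,0) * β (1,0)) * (α (1,1) * β (1,1)) = 0 := by
    linear_combination (α (1,1) * β (1,0)) * z3
  have P13 : (α (0,0) * β (0,0)) * (α (1,0) * β (1,0)) = 0 := by
    linear_combination (α (1,0) * β (0,0)) * w1
  have P24 : (α (0,1) * β (0,1)) * (α (1,1) * β (1,1)) = 0 := by
    linear_combination (α (1,1) * β (0,1)) * w2
  -- the target expression vanishes
  have key : α (0,0) * β (0,0) - α (0,1) * β (0,1)
      + α (1,0) * β (1,0) - α (1,1) * β (1,1) = 0 := by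
    rcases mul_eq_zero.mp P12 with hp1 | hp2
    · rcases mul_eq_zero.mp P24 with hp2 | hp4
      · rcases mul_eq_zero.mp P34 with hp3 | hp4
        · linear_combination E10 - 2 * hp2 + 2 * hp3
        · linear_combination -E10 + 2 * hp1 - 2 * hp4
      · linear_combination -E10 + 2 * hp1 - 2 * hp4
    · rcases mul_eq_zero.mp P13 with hp1 | hp3
      · rcases mul_eq_zero.mp P34 with hp3 | hp4
        · linear_combination E10 - 2 * hp2 + 2 * hp3
        · linear_combination -E10 + 2 * hp1 - 2 * hp4
      · linear_combination E10 - 2 * hp2 + 2 * hp3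
  apply hne
  rw [comp01 α β, key, mul_zero]
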